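/- Under the contraction property of the operator T u(x) = min_{a∈A}[c(x,a) + ∫ u dp̂(·|x,a)] with modulus β = 1 − λ(X) < 1, there exists a unique fixed point h ∈ C_b(X) of T, and h satisfies the average cost optimality equation h(x) + ρ = min_{a∈A}[ c(x,a) + ∫_X h(y) p(dy|x,a) ], where ρ = ∫_X h dλ. -/
import Mathlib


open MeasureTheory ProbabilityTheory BoundedContinuousFunction Filter

/-- The contraction `T` has a unique fixed point `h ∈ C_b(X)`, and any fixed
point satisfies the average cost optimality equation
`h(x) + ρ = min_a [c(x,a) + ∫ h dp(·|x,a)]` with `ρ = ∫ h dλ`. -/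
theorem stmt1
    {X A : Type*}
    [MetricSpace X] [CompleteSpace X] [TopologicalSpace.SeparableSpace X]
    [MeasurableSpace X] [BorelSpace X]
    [MetricSpace A] [CompactSpace A] [Nonempty A]
    [MeasurableSpace A] [BorelSpace A]
    (p : Kernel (X × A) X) [IsMarkovKernel p]
    (c : BoundedContinuousFunction (X × A) ℝ)
    (hc_nonneg : ∀ z, 0 ≤ c z)
    (lam : Measure X) [IsFiniteMeasure lam]
    (hlam_sub : lam Set.univ ≤ 1)
    (hlam_ne : lam ≠ 0)
    (hp_cont : ∀ u : BoundedContinuousFunction X ℝ,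
      Continuous fun z : X × A => ∫ y, u y ∂(p z))
    (hminor : ∀ z : X × A, ∀ B : Set X, MeasurableSet B → lam B ≤ p z B)
    (T : BoundedContinuousFunction X ℝ → BoundedContinuousFunction X ℝ)
    (hT : ∀ u x, T u x =
      ⨅ a : A, (c (x, a) + ∫ y, u y ∂(p (x, a)) - ∫ y, u y ∂lam))
    (hbeta : 1 - (lam Set.univ).toReal < 1)
    (hcontr : ∀ u v, dist (T u) (T v) ≤ (1 - (lam Set.univ).toReal) * dist u v) :
    (∃! h : BoundedContinuousFunction X ℝ, T h = h) ∧
      ∀ h : BoundedContinuousFunction X ℝ, T h = h →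
        ∀ x, h x + ∫ y, h y ∂lam =
          ⨅ a : A, (c (x, a) + ∫ y, h y ∂(p (x, a))) := by
  have hβ0 : 0 ≤ 1 - (lam Set.univ).toReal := by
    have h1 : (lam Set.univ).toReal ≤ 1 := by
      rw [← ENNReal.toReal_one]
      exact ENNReal.toReal_mono ENNReal.one_ne_top hlam_sub
    linarith
  set β : NNReal := ⟨1 - (lam Set.univ).toReal, hβ0⟩ with hβ
  have hlip : LipschitzWith β T := LipschitzWith.of_dist_le_mul (by exact_mod_cast hcontr)
  have hcw : ContractingWith β T := ⟨by exact_mod_cast hbeta, hlip⟩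
  constructor
  · exact ⟨hcw.fixedPoint, hcw.fixedPoint_isFixedPt,
      fun y hy => (hcw.fixedPoint_unique hy)⟩
  · intro h hfix x
    have hb : BddBelow (Set.range fun a : A => c (x, a) + ∫ y, h y ∂(p (x, a))) := by
      refine ⟨-‖h‖, ?_⟩
      rintro _ ⟨a, rfl⟩
      dsimp only
      have h1 : ‖∫ y, h y ∂(p (x, a))‖ ≤ ‖h‖ * ((p (x, a)) Set.univ).toReal :=
        norm_integral_le_of_norm_le_const (ae_of_all _ fun y => h.norm_coe_le_norm y)
      have h2 : ((p (x, a)) Set.univ).toReal = 1 := by simp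
      rw [h2, mul_one, Real.norm_eq_abs] at h1
      have h3 := neg_le_of_abs_le h1
      have := hc_nonneg (x, a)
      linarith
    have hx : h x = ⨅ a : A, (c (x, a) + ∫ y, h y ∂(p (x, a)) - ∫ y, h y ∂lam) := by
      conv_lhs => rw [← hfix]
      exact hT h x
    rw [hx]
    have : (⨅ a : A, (c (x, a) + ∫ y, h y ∂(p (x, a)) - ∫ y, h y ∂lam))
        = (⨅ a : A, (c (x, a) + ∫ y, h y ∂(p (x, a)))) - ∫ y, h y ∂lam := by
      rw [← ciInf_sub hb]
    rw [this]
    ring
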